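/- arXiv:1309.6937 — 5 statements merged into one kernel-verified Lean document; each statement's English description precedes it below -/
import Mathlib

section
/- Let P = [[e,g],[h,f]] and P' = [[f,-g],[-h,e]] be 2×2 complex matrices, and let A = [[a,b],[-b̄,ā]] and C = [[c,d],[-d̄,c̄]] be 2×2 matrices of quaternion type. Then A·P·C* + C·P'·A* is a scalar multiple of the identity matrix I₂. -/
open Complex Matrix

theorem quaternion_type_sandwich_scalar (e g h f a b c d : ℂ)
    (P P' A C : Matrix (Fin 2) (Fin 2) ℂ)
    (hP : P = !![e, g; h, f])
    (hP' : P' = !![f, -g; -h, e])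
    (hA : A = !![a, b; -(starRingEnd ℂ b), starRingEnd ℂ a])
    (hC : C = !![c, d; -(starRingEnd ℂ d), starRingEnd ℂ c]) :
    ∃ t : ℂ, A * P * Cᴴ + C * P' * Aᴴ = t • (1 : Matrix (Fin 2) (Fin 2) ℂ) := by
  subst hP hP' hA hC
  refine ⟨(a * e + b * h) * starRingEnd ℂ c + (a * g + b * f) * starRingEnd ℂ d
    + (c * f - d * h) * starRingEnd ℂ a + (-(c * g) + d * e) * starRingEnd ℂ b, ?_⟩
  ext i j
  fin_cases i <;> fin_cases j <;>
    simp [Matrix.mul_apply, Matrix.conjTranspose_apply, Fin.sum_univ_two, Matrix.one_apply, Matrix.vecMul, dotProduct, _root_.map_mul] <;> ring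
end

section
/- Let W be an n×n quaternion Hermitian (self-dual) matrix, represented as a 2n×2n complex Hermitian matrix W^R via the standard embedding of quaternions into 2×2 complex matrices. Then for any z ∈ ℂ with Im z > 0, the resolvent (W^R − z·I₂ₙ)⁻¹ has the property that each diagonal 2×2 block is a scalar multiple of the identity matrix I₂. -/
open Complex Matrix Quaternion

/-- The standard embedding of a quaternion as a `2 × 2` complex matrix. -/
noncomputable def quatToMatrix (x : ℍ[ℝ]) : Matrix (Fin 2) (Fin 2) ℂ :=
  !![(x.re : ℂ) + x.imI * I, (x.imJ : ℂ) + x.imK * I;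
     -((x.imJ : ℂ) - x.imK * I), (x.re : ℂ) - x.imI * I]

/-- The `2n × 2n` complex representation of an `n × n` quaternion matrix. -/
noncomputable def quatMatrixRep {n : ℕ} (W : Matrix (Fin n) (Fin n) ℍ[ℝ]) :
    Matrix (Fin n × Fin 2) (Fin n × Fin 2) ℂ :=
  fun p q => quatToMatrix (W p.1 q.1) p.2 q.2

/-- The `(j,k)`-th `2 × 2` block of a `2n × 2n` complex matrix. -/
def blk {n : ℕ} (M : Matrix (Fin n × Fin 2) (Fin n × Fin 2) ℂ)
    (j k : Fin n) : Matrix (Fin 2) (Fin 2) ℂ :=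
  fun p q => M (j, p) (k, q)

/-- The basic `2 × 2` symplectic matrix. -/
def Em : Matrix (Fin 2) (Fin 2) ℂ := !![0,1;-1,0]

/-- The `2n × 2n` block-diagonal symplectic matrix. -/
def Jm (n : ℕ) : Matrix (Fin n × Fin 2) (Fin n × Fin 2) ℂ :=
  fun a b => if a.1 = b.1 then Em a.2 b.2 else 0

lemma Jm_mul_neg (n : ℕ) : Jm n * (-Jm n) = 1 := by
  ext ⟨j,p⟩ ⟨k,q⟩
  by_cases h : j = k <;>
    simp [Jm, mul_apply, Fintype.sum_prod_type, h, Em, Fin.sum_univ_two,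
      one_apply, Prod.ext_iff] <;>
    fin_cases p <;> fin_cases q <;> simp

lemma neg_Jm_mul (n : ℕ) : (-Jm n) * Jm n = 1 := by
  have h := Jm_mul_neg n
  rw [mul_neg] at h
  rwa [neg_mul]

lemma rep_transpose_mul_J {n : ℕ} (W : Matrix (Fin n) (Fin n) ℍ[ℝ]) (hW : W.IsHermitian) :
    (quatMatrixRep W)ᵀ * Jm n = Jm n * quatMatrixRep W := by
  ext ⟨j,p⟩ ⟨k,q⟩
  have hWkj : W k j = star (W j k) := by
    conv_lhs => rw [← hW]
    rfl
  simp only [mul_apply, Fintype.sum_prod_type, Jm, transpose_apply, quatMatrixRep]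
  simp [hWkj, Fin.sum_univ_two, mul_ite, Finset.sum_ite_eq, Finset.sum_ite_eq']
  fin_cases p <;> fin_cases q <;>
    simp [quatToMatrix, Em] <;> ring

theorem resolvent_diagonal_blocks_scalar {n : ℕ}
    (W : Matrix (Fin n) (Fin n) ℍ[ℝ]) (hW : W.IsHermitian)
    (z : ℂ) (hz : 0 < z.im) (j : Fin n) :
    ∃ t : ℂ,
      blk ((quatMatrixRep W - z • (1 : Matrix (Fin n × Fin 2) (Fin n × Fin 2) ℂ))⁻¹) j j
        = t • (1 : Matrix (Fin 2) (Fin 2) ℂ) := by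
  set A : Matrix (Fin n × Fin 2) (Fin n × Fin 2) ℂ :=
    quatMatrixRep W - z • 1 with hAdef
  have hA : Aᵀ * Jm n = Jm n * A := by
    rw [hAdef, transpose_sub, transpose_smul, transpose_one, sub_mul, mul_sub,
      rep_transpose_mul_J W hW, Matrix.smul_mul, Matrix.mul_smul, one_mul, mul_one]
  have hJinv : (Jm n)⁻¹ = -Jm n := Matrix.inv_eq_right_inv (Jm_mul_neg n)
  have hnegJinv : (-Jm n)⁻¹ = Jm n := Matrix.inv_eq_right_inv (neg_Jm_mul n)
  have hAT : Aᵀ = Jm n * A * (-Jm n) := by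
    calc Aᵀ = Aᵀ * (Jm n * (-Jm n)) := by rw [Jm_mul_neg, mul_one]
    _ = (Aᵀ * Jm n) * (-Jm n) := by rw [mul_assoc]
    _ = Jm n * A * (-Jm n) := by rw [hA]
  have hR : (A⁻¹)ᵀ * Jm n = Jm n * A⁻¹ := by
    rw [Matrix.transpose_nonsing_inv, hAT, Matrix.mul_inv_rev, Matrix.mul_inv_rev,
      hnegJinv, hJinv]
    calc Jm n * (A⁻¹ * (-Jm n)) * Jm n = Jm n * A⁻¹ * ((-Jm n) * Jm n) := by
          rw [← mul_assoc, ← mul_assoc]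
    _ = Jm n * A⁻¹ := by rw [neg_Jm_mul, mul_one]
  set R := A⁻¹ with hRdef
  have key : ∀ p q : Fin 2,
      (∑ s : Fin 2, R (j,s) (j,p) * Em s q) = ∑ r : Fin 2, Em p r * R (j,r) (j,q) := by
    intro p q
    have h := congrFun (congrFun hR (j,p)) (j,q)
    simpa [mul_apply, Fintype.sum_prod_type, Jm, Fin.sum_univ_two, mul_ite,
      Finset.sum_ite_eq, Finset.sum_ite_eq'] using h
  have h00 := key 0 0
  have h01 := key 0 1
  have h11 := key 1 1
  simp [Fin.sum_univ_two, Em] at h00 h01 h11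
  refine ⟨R (j,0) (j,0), ?_⟩
  ext p q
  fin_cases p <;> fin_cases q <;>
    simp [blk, one_apply]
  · linear_combination h11 / 2
  · linear_combination -h00 / 2
  · exact h01.symm
end

section
/- Every eigenvalue of the 2n×2n complex Hermitian matrix representation W^R of an n×n quaternion Hermitian matrix W has even multiplicity (multiplicity at least 2). -/
open Complex Matrix Quaternion

section AuxAbstract

open Module

variable {E : Type} [AddCommGroup E] [Module ℂ E] [Module ℝ E] [IsScalarTower ℝ ℂ E]
  (Ψ : E → E)
  (hadd : ∀ u v, Ψ (u + v) = Ψ u + Ψ v)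
  (hsmul : ∀ (c : ℂ) v, Ψ (c • v) = (starRingEnd ℂ c) • Ψ v)
  (hsq : ∀ v, Ψ (Ψ v) = -v)

include hadd hsmul hsq in
/-- A complex vector space admitting a quaternionic (antilinear, square `-1`) structure
has even complex dimension. -/
lemma even_finrank_of_antilinear : Even (finrank ℂ E) := by
  letI : SMul ℍ[ℝ] E := ⟨fun q v => (⟨q.re, q.imI⟩ : ℂ) • v + (⟨q.imJ, q.imK⟩ : ℂ) • Ψ v⟩
  have smul_def : ∀ (q : ℍ[ℝ]) (v : E),
      q • v = (⟨q.re, q.imI⟩ : ℂ) • v + (⟨q.imJ, q.imK⟩ : ℂ) • Ψ v := fun _ _ => rfl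
  have hzero : Ψ 0 = 0 := by
    have := hadd 0 0; simpa using this.symm
  letI : MulAction ℍ[ℝ] E :=
  { one_smul := fun v => by
      simp [smul_def, Complex.ext_iff, show ((⟨1,0⟩:ℂ)) = 1 from rfl]
    mul_smul := fun p q v => by
      rw [smul_def, smul_def, smul_def, hadd, hsmul, hsmul, hsq]
      have h1 : (⟨(p*q).re, (p*q).imI⟩ : ℂ)
          = (⟨p.re, p.imI⟩ : ℂ) * (⟨q.re, q.imI⟩ : ℂ)
            - (⟨p.imJ, p.imK⟩ : ℂ) * (starRingEnd ℂ (⟨q.imJ, q.imK⟩ : ℂ)) := by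
        simp [Complex.ext_iff, Quaternion.re_mul, Quaternion.imI_mul]; constructor <;> ring
      have h2 : (⟨(p*q).imJ, (p*q).imK⟩ : ℂ)
          = (⟨p.re, p.imI⟩ : ℂ) * (⟨q.imJ, q.imK⟩ : ℂ)
            + (⟨p.imJ, p.imK⟩ : ℂ) * (starRingEnd ℂ (⟨q.re, q.imI⟩ : ℂ)) := by
        simp [Complex.ext_iff, Quaternion.imJ_mul, Quaternion.imK_mul]; constructor <;> ring
      rw [h1, h2]
      module }
  letI : DistribMulAction ℍ[ℝ] E :=
  { smul_zero := fun q => by simp [smul_def, hzero]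
    smul_add := fun q u v => by rw [smul_def, smul_def, smul_def, hadd]; module }
  letI : Module ℍ[ℝ] E :=
  { add_smul := fun p q v => by
      rw [smul_def, smul_def, smul_def]
      have h1 : (⟨(p+q).re, (p+q).imI⟩ : ℂ) = (⟨p.re, p.imI⟩ : ℂ) + (⟨q.re, q.imI⟩ : ℂ) := by
        simp [Complex.ext_iff]
      have h2 : (⟨(p+q).imJ, (p+q).imK⟩ : ℂ) = (⟨p.imJ, p.imK⟩ : ℂ) + (⟨q.imJ, q.imK⟩ : ℂ) := by
        simp [Complex.ext_iff]
      rw [h1, h2]; module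
    zero_smul := fun v => by simp [smul_def, show ((⟨0,0⟩:ℂ)) = 0 from rfl] }
  haveI : IsScalarTower ℝ ℍ[ℝ] E := ⟨fun r q v => by
    rw [smul_def, smul_def]
    have h1 : (⟨(r • q).re, (r • q).imI⟩ : ℂ) = (r : ℂ) * (⟨q.re, q.imI⟩ : ℂ) := by
      simp [Complex.ext_iff]
    have h2 : (⟨(r • q).imJ, (r • q).imK⟩ : ℂ) = (r : ℂ) * (⟨q.imJ, q.imK⟩ : ℂ) := by
      simp [Complex.ext_iff]
    rw [h1, h2, mul_smul, mul_smul, ← smul_add]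
    rw [← Complex.coe_algebraMap, algebraMap_smul]⟩
  have e1 : finrank ℝ ℂ * finrank ℂ E = finrank ℝ E := Module.finrank_mul_finrank ℝ ℂ E
  have e2 : finrank ℝ ℍ[ℝ] * finrank ℍ[ℝ] E = finrank ℝ E := Module.finrank_mul_finrank ℝ ℍ[ℝ] E
  rw [Complex.finrank_real_complex] at e1
  rw [Quaternion.finrank_eq_four] at e2
  exact ⟨finrank ℍ[ℝ] E, by omega⟩

end AuxAbstract

/-- The antilinear "multiplication by j" map on `ℂ^(n × 2)`. -/
noncomputable def Psi {n : ℕ} (v : Fin n × Fin 2 → ℂ) : Fin n × Fin 2 → ℂ :=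
  fun p => if p.2 = 0 then (starRingEnd ℂ) (v (p.1, 1)) else -((starRingEnd ℂ) (v (p.1, 0)))

variable {n : ℕ}

lemma Psi_add (u v : Fin n × Fin 2 → ℂ) : Psi (u + v) = Psi u + Psi v := by
  funext ⟨i, s⟩
  fin_cases s <;> simp [Psi] <;> ring

lemma Psi_smul (c : ℂ) (v : Fin n × Fin 2 → ℂ) :
    Psi (c • v) = (starRingEnd ℂ c) • Psi v := by
  funext ⟨i, s⟩
  fin_cases s <;> simp [Psi] <;> ring

lemma Psi_Psi (v : Fin n × Fin 2 → ℂ) : Psi (Psi v) = -v := by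
  funext ⟨i, s⟩
  fin_cases s <;> simp [Psi]

lemma key1 (x : ℍ[ℝ]) : quatToMatrix x 1 1 = (starRingEnd ℂ) (quatToMatrix x 0 0) := by
  simp [quatToMatrix, Complex.ext_iff]

lemma key2 (x : ℍ[ℝ]) : quatToMatrix x 1 0 = -((starRingEnd ℂ) (quatToMatrix x 0 1)) := by
  simp [quatToMatrix, Complex.ext_iff]

lemma Psi_mulVec (W : Matrix (Fin n) (Fin n) ℍ[ℝ]) (v : Fin n × Fin 2 → ℂ) :
    quatMatrixRep W *ᵥ Psi v = Psi (quatMatrixRep W *ᵥ v) := by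
  funext ⟨i, s⟩
  fin_cases s <;>
  · simp only [Psi, mulVec, dotProduct, Fintype.sum_prod_type, Fin.sum_univ_two, map_sum,
      quatMatrixRep, map_add, _root_.map_mul, Fin.isValue, Fin.zero_eta, Fin.mk_one]
    simp only [if_true, if_neg (by decide : (1 : Fin 2) ≠ 0), ← Finset.sum_neg_distrib]
    refine Finset.sum_congr rfl fun j _ => ?_
    rw [key1 (W i j), key2 (W i j)]
    try simp only [map_neg, map_add, _root_.map_mul, RingHom.id_apply, Complex.conj_conj]
    ring

lemma rep_hermitian (W : Matrix (Fin n) (Fin n) ℍ[ℝ]) (hW : W.IsHermitian) :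
    (quatMatrixRep W).IsHermitian := by
  refine Matrix.IsHermitian.ext fun ⟨i, s⟩ ⟨j, t⟩ => ?_
  have hij : W j i = star (W i j) := by
    conv_lhs => rw [← hW]
    simp [Matrix.conjTranspose_apply]
  show star (quatMatrixRep W (j, t) (i, s)) = quatMatrixRep W (i, s) (j, t)
  simp only [quatMatrixRep]
  rw [hij]
  fin_cases s <;> fin_cases t <;>
    simp [quatToMatrix, Complex.ext_iff]

theorem eigenvalues_even_multiplicity {n : ℕ}
    (W : Matrix (Fin n) (Fin n) ℍ[ℝ]) (hW : W.IsHermitian) (μ : ℂ) :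
    Even (Module.finrank ℂ
      (Module.End.eigenspace (Matrix.toLin' (quatMatrixRep W)) μ)) ∧
    (Module.End.HasEigenvalue (Matrix.toLin' (quatMatrixRep W)) μ →
      2 ≤ Module.finrank ℂ
        (Module.End.eigenspace (Matrix.toLin' (quatMatrixRep W)) μ)) := by
  set f := Matrix.toLin' (quatMatrixRep W) with hf
  set E := Module.End.eigenspace f μ with hEdef
  by_cases hbot : E = ⊥
  · constructor
    · rw [hbot]; simp
    · intro h
      exact absurd hbot (Module.End.hasEigenvalue_iff.mp h)
  · -- the eigenvalue is real
    obtain ⟨v, hvE, hv0⟩ := Submodule.exists_mem_ne_zero_of_ne_bot hbot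
    have hv : quatMatrixRep W *ᵥ v = μ • v := by
      have h := (Module.End.mem_eigenspace_iff).mp hvE
      simpa [hf, Matrix.toLin'_apply] using h
    have hA := rep_hermitian W hW
    have hμ : (starRingEnd ℂ) μ = μ := by
      have h1 : star v ⬝ᵥ (quatMatrixRep W *ᵥ v) = μ * (star v ⬝ᵥ v) := by
        rw [hv]; simp [smul_eq_mul]
      have h2 : star v ⬝ᵥ (quatMatrixRep W *ᵥ v)
          = (starRingEnd ℂ) μ * (star v ⬝ᵥ v) := by
        rw [Matrix.dotProduct_mulVec]
        have hvA : star v ᵥ* quatMatrixRep W = star (quatMatrixRep W *ᵥ v) := by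
          rw [Matrix.star_mulVec, hA.eq]
        have hst : star (μ • v) = (starRingEnd ℂ) μ • star v := by
          funext p; simp [mul_comm]
        rw [hvA, hv, hst, smul_dotProduct]
        simp [smul_eq_mul]
      have hvv : star v ⬝ᵥ v ≠ 0 := by
        open ComplexOrder in
        exact fun h => hv0 (dotProduct_star_self_eq_zero.mp h)
      exact mul_right_cancel₀ hvv (h2.symm.trans h1)
    -- Psi preserves the eigenspace
    have hmem : ∀ w ∈ E, Psi w ∈ E := by
      intro w hw
      rw [hEdef, Module.End.mem_eigenspace_iff] at hw ⊢
      rw [hf, Matrix.toLin'_apply] at hw ⊢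
      rw [Psi_mulVec, hw, Psi_smul, hμ]
    have heven : Even (Module.finrank ℂ E) := by
      refine even_finrank_of_antilinear (E := E) (fun w => ⟨Psi w.1, hmem w.1 w.2⟩)
        ?_ ?_ ?_
      · intro u v; apply Subtype.ext; simp [Psi_add]
      · intro c v; apply Subtype.ext; simp [Psi_smul]
      · intro v; apply Subtype.ext; simp [Psi_Psi]
    refine ⟨heven, fun _ => ?_⟩
    have hnt : Nontrivial E := Submodule.nontrivial_iff_ne_bot.mpr hbot
    have hpos : 0 < Module.finrank ℂ E := Module.finrank_pos
    obtain ⟨k, hk⟩ := heven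
    omega
end

section
/- Let A and B be two n×n Hermitian complex matrices with empirical spectral distributions F^A and F^B. Then ‖F^A − F^B‖_∞ ≤ rank(A−B)/n. -/
open Complex Matrix

/-- The empirical spectral distribution function of an `n × n` complex matrix:
it puts mass `1/n` at (the real part of) each eigenvalue, i.e. each root of the
characteristic polynomial counted with multiplicity. -/
noncomputable def esd {n : ℕ} (A : Matrix (Fin n) (Fin n) ℂ) (x : ℝ) : ℝ :=
  ((A.charpoly.roots.filter fun μ => μ.re ≤ x).card : ℝ) / n

namespace EsdRankAux

open Polynomial Finset Submodule

variable {n : ℕ} {A B : Matrix (Fin n) (Fin n) ℂ}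

lemma charpoly_conj_unitary (U : Matrix.unitaryGroup (Fin n) ℂ) (D : Matrix (Fin n) (Fin n) ℂ) :
    ((U : Matrix (Fin n) (Fin n) ℂ) * D * star (U : Matrix (Fin n) (Fin n) ℂ)).charpoly
      = D.charpoly := by
  have hUs : (U : Matrix (Fin n) (Fin n) ℂ) * star (U : Matrix (Fin n) (Fin n) ℂ) = 1 :=
    Matrix.mem_unitaryGroup_iff.mp U.2
  set f : Matrix (Fin n) (Fin n) ℂ →+* Matrix (Fin n) (Fin n) ℂ[X] :=
    (C : ℂ →+* ℂ[X]).mapMatrix with hf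
  have hcomm : ∀ M : Matrix (Fin n) (Fin n) ℂ[X],
      M * Matrix.scalar (Fin n) (X : ℂ[X]) = Matrix.scalar (Fin n) (X : ℂ[X]) * M := by
    intro M
    ext i j
    simp [Matrix.scalar_apply, Matrix.mul_diagonal, Matrix.diagonal_mul, mul_comm]
  have key : charmatrix ((U : Matrix (Fin n) (Fin n) ℂ) * D * star (U : Matrix (Fin n) (Fin n) ℂ))
      = f ↑U * charmatrix D * f (star ↑U) := by
    unfold charmatrix
    rw [mul_sub, sub_mul]
    congr 1
    · rw [hcomm, mul_assoc, ← f.map_mul, hUs, f.map_one, mul_one]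
    · rw [← f.map_mul, ← f.map_mul]
  rw [Matrix.charpoly, key, det_mul, det_mul, mul_comm ((f ↑U).det) _, mul_assoc, ← det_mul,
    ← f.map_mul, hUs, f.map_one, det_one, mul_one]
  rfl

lemma charpoly_of_hermitian (hA : A.IsHermitian) :
    A.charpoly = ∏ i, (X - C ((hA.eigenvalues i : ℂ))) := by
  conv_lhs => rw [hA.spectral_theorem]
  rw [Unitary.conjStarAlgAut_apply, charpoly_conj_unitary]
  rw [Matrix.charpoly_of_upperTriangular _ (Matrix.blockTriangular_diagonal _)]
  simp

lemma roots_charpoly_of_hermitian (hA : A.IsHermitian) :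
    A.charpoly.roots = Finset.univ.val.map (fun i => ((hA.eigenvalues i : ℂ))) := by
  rw [charpoly_of_hermitian hA, Finset.prod_eq_multiset_prod]
  have := Polynomial.roots_multiset_prod_X_sub_C
    (Finset.univ.val.map fun i : Fin n => (hA.eigenvalues i : ℂ))
  rw [Multiset.map_map] at this
  simpa using this

/-- The number of eigenvalues (with multiplicity) that are at most `x`. -/
noncomputable def cnt {A : Matrix (Fin n) (Fin n) ℂ} (hA : A.IsHermitian) (x : ℝ) : ℕ :=
  (Finset.univ.filter fun i => hA.eigenvalues i ≤ x).card

lemma esd_eq_cnt (hA : A.IsHermitian) (x : ℝ) :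
    esd A x = (cnt hA x : ℝ) / n := by
  unfold esd cnt
  congr 2
  rw [roots_charpoly_of_hermitian hA, Multiset.filter_map, Multiset.card_map, Finset.card_filter]
  simp [Multiset.countP_eq_card_filter, Function.comp]
  rfl

lemma toEuclideanLin_eigenvectorBasis (hA : A.IsHermitian) (j : Fin n) :
    Matrix.toEuclideanLin A (hA.eigenvectorBasis j)
      = (hA.eigenvalues j : ℂ) • hA.eigenvectorBasis j := by
  apply PiLp.ext
  intro i
  have h := congrFun (hA.mulVec_eigenvectorBasis j) i
  simpa [Matrix.toEuclideanLin_apply, Complex.real_smul] using h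

lemma repr_toEuclideanLin (hA : A.IsHermitian) (v : EuclideanSpace ℂ (Fin n)) (i : Fin n) :
    hA.eigenvectorBasis.repr (Matrix.toEuclideanLin A v) i
      = (hA.eigenvalues i : ℂ) * hA.eigenvectorBasis.repr v i := by
  conv_lhs => rw [← hA.eigenvectorBasis.sum_repr v]
  simp only [map_sum]
  rw [WithLp.ofLp_sum, Fintype.sum_apply]
  have hterm : ∀ j : Fin n,
      (hA.eigenvectorBasis.repr ((Matrix.toEuclideanLin A)
        (hA.eigenvectorBasis.repr v j • hA.eigenvectorBasis j))) i
      = (hA.eigenvalues j : ℂ) * hA.eigenvectorBasis.repr v j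
        * (EuclideanSpace.single j (1 : ℂ)) i := by
    intro j
    rw [LinearMap.map_smul, toEuclideanLin_eigenvectorBasis hA,
      LinearIsometryEquiv.map_smul, LinearIsometryEquiv.map_smul,
      hA.eigenvectorBasis.repr_self]
    simp [smul_smul, mul_comm]
  rw [Finset.sum_congr rfl fun j _ => hterm j, Finset.sum_eq_single i]
  · simp [EuclideanSpace.single_apply]
  · intro j _ hj
    simp [EuclideanSpace.single_apply, Ne.symm hj]
  · simp

lemma re_inner_self (b : OrthonormalBasis (Fin n) ℂ (EuclideanSpace ℂ (Fin n)))
    (v : EuclideanSpace ℂ (Fin n)) :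
    Complex.re (inner ℂ v v : ℂ) = ∑ i, Complex.normSq (b.repr v i) := by
  rw [← b.repr.inner_map_map v v, PiLp.inner_apply, Complex.re_sum]
  congr 1
  funext i
  simp [RCLike.inner_apply, Complex.normSq_eq_conj_mul_self, Complex.normSq_apply]
  rw [← Complex.ofReal_pow, Complex.ofReal_re, Complex.sq_norm, Complex.normSq_apply]

lemma re_inner_toEuclideanLin (hA : A.IsHermitian) (v : EuclideanSpace ℂ (Fin n)) :
    Complex.re (inner ℂ v (Matrix.toEuclideanLin A v) : ℂ)
      = ∑ i, hA.eigenvalues i * Complex.normSq (hA.eigenvectorBasis.repr v i) := by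
  rw [← hA.eigenvectorBasis.repr.inner_map_map v _, PiLp.inner_apply, Complex.re_sum]
  congr 1
  funext i
  rw [RCLike.inner_apply, repr_toEuclideanLin hA]
  rw [show (hA.eigenvalues i : ℂ) * hA.eigenvectorBasis.repr v i
      * (starRingEnd ℂ) (hA.eigenvectorBasis.repr v i)
    = (hA.eigenvalues i : ℂ) * ((starRingEnd ℂ) (hA.eigenvectorBasis.repr v i)
      * hA.eigenvectorBasis.repr v i) by ring]
  rw [← Complex.normSq_eq_conj_mul_self]
  simp

lemma mem_span_onb_iff (b : OrthonormalBasis (Fin n) ℂ (EuclideanSpace ℂ (Fin n)))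
    (s : Finset (Fin n)) (v : EuclideanSpace ℂ (Fin n)) :
    v ∈ span ℂ (b '' s) ↔ ∀ i ∉ s, b.repr v i = 0 := by
  have h : (b : Fin n → EuclideanSpace ℂ (Fin n)) '' s = b.toBasis '' s := by
    rw [b.coe_toBasis]
  rw [h, Module.Basis.mem_span_image, Finsupp.support_subset_iff]
  constructor
  · intro hsupp i hi
    rw [← b.coe_toBasis_repr_apply]
    exact hsupp i hi
  · intro hrep i hi
    rw [b.coe_toBasis_repr_apply]
    exact hrep i hi

lemma finrank_span_onb (b : OrthonormalBasis (Fin n) ℂ (EuclideanSpace ℂ (Fin n)))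
    (s : Finset (Fin n)) :
    Module.finrank ℂ (span ℂ ((b : Fin n → EuclideanSpace ℂ (Fin n)) '' s)) = s.card := by
  have hli : LinearIndependent ℂ (fun i : (s : Set (Fin n)) => b i) :=
    b.toBasis.linearIndependent.comp _ Subtype.val_injective
  rw [Set.image_eq_range, finrank_span_eq_card hli]
  simp

lemma finrank_ker_add_rank (M : Matrix (Fin n) (Fin n) ℂ) :
    Module.finrank ℂ (LinearMap.ker (Matrix.toEuclideanLin M)) + M.rank = n := by
  have h1 := LinearMap.finrank_range_add_finrank_ker (Matrix.toEuclideanLin M)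
  have h2 : M.rank = Module.finrank ℂ (LinearMap.range (Matrix.toEuclideanLin M)) := by
    rw [Matrix.toEuclideanLin_eq_toLin_orthonormal]
    exact M.rank_eq_finrank_range_toLin _ _
  rw [finrank_euclideanSpace_fin] at h1
  omega

lemma rank_neg (M : Matrix (Fin n) (Fin n) ℂ) : (-M).rank = M.rank := by
  unfold Matrix.rank
  have : Matrix.mulVecLin (-M) = -(Matrix.mulVecLin M) := by
    ext v i
    simp [Matrix.neg_mulVec]
  rw [this, LinearMap.range_neg]

lemma cnt_le_cnt_add_rank (hA : A.IsHermitian) (hB : B.IsHermitian) (x : ℝ) :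
    cnt hA x ≤ cnt hB x + (A - B).rank := by
  classical
  set sA : Finset (Fin n) := univ.filter fun i => hA.eigenvalues i ≤ x with hsA
  set sB : Finset (Fin n) := univ.filter fun i => ¬ hB.eigenvalues i ≤ x with hsB
  set WA : Submodule ℂ (EuclideanSpace ℂ (Fin n)) := span ℂ (hA.eigenvectorBasis '' sA) with hWA
  set UB : Submodule ℂ (EuclideanSpace ℂ (Fin n)) := span ℂ (hB.eigenvectorBasis '' sB) with hUB
  set K : Submodule ℂ (EuclideanSpace ℂ (Fin n)) :=
    LinearMap.ker (Matrix.toEuclideanLin (A - B)) with hK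
  -- disjointness
  have hdisj : (WA ⊓ K) ⊓ UB = ⊥ := by
    rw [eq_bot_iff]
    intro v hv
    obtain ⟨⟨hv1, hv2⟩, hv3⟩ := hv
    rw [mem_bot]
    by_contra hv0
    have hAB : Matrix.toEuclideanLin A v = Matrix.toEuclideanLin B v := by
      have h0 : Matrix.toEuclideanLin (A - B) v = 0 := hv2
      rw [map_sub, LinearMap.sub_apply, sub_eq_zero] at h0
      exact h0
    have hA1 : ∀ i ∉ sA, hA.eigenvectorBasis.repr v i = 0 := (mem_span_onb_iff _ _ _).1 hv1
    have h1 : Complex.re (inner ℂ v (Matrix.toEuclideanLin A v) : ℂ)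
        ≤ x * Complex.re (inner ℂ v v : ℂ) := by
      rw [re_inner_toEuclideanLin hA, re_inner_self hA.eigenvectorBasis, Finset.mul_sum]
      apply Finset.sum_le_sum
      intro i _
      by_cases hi : i ∈ sA
      · have : hA.eigenvalues i ≤ x := by simpa [hsA] using hi
        exact mul_le_mul_of_nonneg_right this (Complex.normSq_nonneg _)
      · rw [hA1 i hi]
        simp
    have hB1 : ∀ i ∉ sB, hB.eigenvectorBasis.repr v i = 0 := (mem_span_onb_iff _ _ _).1 hv3
    have hex : ∃ i, hB.eigenvectorBasis.repr v i ≠ 0 := by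
      by_contra hall
      push_neg at hall
      apply hv0
      apply hB.eigenvectorBasis.repr.injective
      apply PiLp.ext
      intro i
      simp [hall i]
    obtain ⟨i0, hi0⟩ := hex
    have hi0B : i0 ∈ sB := by
      by_contra h
      exact hi0 (hB1 i0 h)
    have hxlt : x < hB.eigenvalues i0 := by
      have := Finset.mem_filter.1 hi0B
      exact lt_of_not_ge this.2
    have h2 : x * Complex.re (inner ℂ v v : ℂ)
        < Complex.re (inner ℂ v (Matrix.toEuclideanLin B v) : ℂ) := by
      rw [re_inner_toEuclideanLin hB, re_inner_self hB.eigenvectorBasis, Finset.mul_sum]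
      apply Finset.sum_lt_sum
      · intro i _
        by_cases hi : i ∈ sB
        · have : x ≤ hB.eigenvalues i :=
            le_of_lt (lt_of_not_ge (Finset.mem_filter.1 hi).2)
          exact mul_le_mul_of_nonneg_right this (Complex.normSq_nonneg _)
        · rw [hB1 i hi]
          simp
      · refine ⟨i0, Finset.mem_univ _, ?_⟩
        have hpos : 0 < Complex.normSq (hB.eigenvectorBasis.repr v i0) :=
          Complex.normSq_pos.2 hi0
        exact mul_lt_mul_of_pos_right hxlt hpos
    rw [hAB] at h1
    linarith
  -- dimension counting
  have hfWA : Module.finrank ℂ WA = sA.card := finrank_span_onb _ _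
  have hfUB : Module.finrank ℂ UB = sB.card := finrank_span_onb _ _
  have hcB : sB.card + cnt hB x = n := by
    have h := Finset.card_filter_add_card_filter_not
      (s := (univ : Finset (Fin n))) (p := fun i => hB.eigenvalues i ≤ x)
    simp only [Finset.card_univ, Fintype.card_fin] at h
    unfold cnt
    rw [hsB]
    omega
  have hK1 : Module.finrank ℂ K + (A - B).rank = n := finrank_ker_add_rank _
  have hsup1 : Module.finrank ℂ (WA ⊔ K : Submodule ℂ (EuclideanSpace ℂ (Fin n))) ≤ n := by
    have := Submodule.finrank_le (WA ⊔ K : Submodule ℂ (EuclideanSpace ℂ (Fin n)))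
    rwa [finrank_euclideanSpace_fin] at this
  have hinf1 := Submodule.finrank_sup_add_finrank_inf_eq WA K
  have hsup2 : Module.finrank ℂ ((WA ⊓ K) ⊔ UB : Submodule ℂ (EuclideanSpace ℂ (Fin n))) ≤ n := by
    have := Submodule.finrank_le ((WA ⊓ K) ⊔ UB : Submodule ℂ (EuclideanSpace ℂ (Fin n)))
    rwa [finrank_euclideanSpace_fin] at this
  have hinf2 := Submodule.finrank_sup_add_finrank_inf_eq (WA ⊓ K) UB
  rw [hdisj, finrank_bot] at hinf2
  have hcA : cnt hA x = sA.card := rfl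
  omega

end EsdRankAux

theorem esd_sup_dist_le_rank {n : ℕ} (hn : 0 < n)
    (A B : Matrix (Fin n) (Fin n) ℂ)
    (hA : A.IsHermitian) (hB : B.IsHermitian) :
    ∀ x : ℝ, |esd A x - esd B x| ≤ ((A - B).rank : ℝ) / n := by
  intro x
  have hn' : (0 : ℝ) < n := by exact_mod_cast hn
  have r1 := EsdRankAux.cnt_le_cnt_add_rank hA hB x
  have r2 := EsdRankAux.cnt_le_cnt_add_rank hB hA x
  have hrk : (B - A).rank = (A - B).rank := by
    rw [← neg_sub, EsdRankAux.rank_neg]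
  rw [hrk] at r2
  rw [EsdRankAux.esd_eq_cnt hA, EsdRankAux.esd_eq_cnt hB, div_sub_div_same, abs_div,
    abs_of_pos hn']
  have habs : |(EsdRankAux.cnt hA x : ℝ) - (EsdRankAux.cnt hB x : ℝ)| ≤ ((A - B).rank : ℝ) := by
    rw [abs_sub_le_iff]
    constructor
    · have : (EsdRankAux.cnt hA x : ℝ) ≤ (EsdRankAux.cnt hB x : ℝ) + ((A - B).rank : ℝ) := by
        exact_mod_cast r1
      linarith
    · have : (EsdRankAux.cnt hB x : ℝ) ≤ (EsdRankAux.cnt hA x : ℝ) + ((A - B).rank : ℝ) := by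
        exact_mod_cast r2
      linarith
  gcongr
end

section
/- Let A be an n×n Hermitian complex matrix and A_k the (n−1)×(n−1) matrix obtained by deleting the k-th row and column. Then for z = u + iv with v > 0, |tr((A − zI_n)⁻¹) − tr((A_k − zI_{n−1})⁻¹)| ≤ 1/v. -/
open Complex Matrix

open scoped ComplexConjugate

lemma herm_det_unit {ι : Type*} [Fintype ι] [DecidableEq ι] {M : Matrix ι ι ℂ}
    (hM : M.IsHermitian) {z : ℂ} (hz : z.im ≠ 0) : IsUnit (M - z • 1).det := by
  rw [isUnit_iff_ne_zero]
  intro hdet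
  obtain ⟨x, hx0, hx⟩ := (Matrix.exists_mulVec_eq_zero_iff).2 hdet
  have hMx : M.mulVec x = z • x := by
    rw [Matrix.sub_mulVec, sub_eq_zero] at hx
    rw [hx, Matrix.smul_mulVec, Matrix.one_mulVec]
  set s : ℝ := ∑ i, Complex.normSq (x i) with hs
  have hsx : star x ⬝ᵥ x = (s : ℂ) := by
    simp [dotProduct, hs, Complex.normSq_eq_conj_mul_self]
  have hspos : 0 < s := by
    rcases Function.ne_iff.1 hx0 with ⟨i, hi⟩
    exact Finset.sum_pos' (fun j _ => Complex.normSq_nonneg _)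
      ⟨i, Finset.mem_univ i, (Complex.normSq_pos).2 hi⟩
  have hq : star x ⬝ᵥ M.mulVec x = z * s := by
    rw [hMx, dotProduct_smul, hsx, smul_eq_mul]
  have hreal : star (star x ⬝ᵥ M.mulVec x) = star x ⬝ᵥ M.mulVec x := by
    rw [← Matrix.star_dotProduct_star]
    rw [star_star, Matrix.star_mulVec, hM.eq, Matrix.dotProduct_mulVec]
  rw [hq] at hreal
  have him := congrArg Complex.im hreal
  simp only [Complex.star_def, Complex.conj_im, Complex.mul_im, Complex.ofReal_im,
    Complex.ofReal_re, mul_zero, add_zero, zero_mul] at him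
  have : z.im * s = 0 := by linarith
  rcases mul_eq_zero.1 this with h | h
  · exact hz h
  · exact hspos.ne' h

theorem trace_resolvent_minor_diff_le {n : ℕ}
    (A : Matrix (Fin (n + 1)) (Fin (n + 1)) ℂ) (hA : A.IsHermitian)
    (k : Fin (n + 1)) (z : ℂ) (hz : 0 < z.im) :
    ‖(((A - z • (1 : Matrix (Fin (n + 1)) (Fin (n + 1)) ℂ))⁻¹).trace
          - ((A.submatrix k.succAbove k.succAbove
              - z • (1 : Matrix (Fin n) (Fin n) ℂ))⁻¹).trace)‖
      ≤ 1 / z.im := by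
  have hvz : z.im ≠ 0 := ne_of_gt hz
  set B := A - z • (1 : Matrix (Fin (n+1)) (Fin (n+1)) ℂ) with hB
  set G := B⁻¹ with hG
  have hBdet : IsUnit B.det := herm_det_unit hA hvz
  have hGB : G * B = 1 := Matrix.nonsing_inv_mul _ hBdet
  have hBG : B * G = 1 := Matrix.mul_nonsing_inv _ hBdet
  set sA := k.succAbove with hsA
  have hsAinj : Function.Injective sA := Fin.succAbove_right_injective
  have hsAne : ∀ i, sA i ≠ k := fun i => Fin.succAbove_ne k i
  set Dm := A.submatrix sA sA - z • (1 : Matrix (Fin n) (Fin n) ℂ) with hDm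
  have hAk : (A.submatrix sA sA).IsHermitian := hA.submatrix sA
  have hDmdet : IsUnit Dm.det := herm_det_unit hAk hvz
  set σ := G k k with hσdef
  set P := ∑ j, Complex.normSq (G k j) with hP
  have hGGH : (G * Gᴴ) k k = (P : ℂ) := by
    simp [Matrix.mul_apply, Matrix.conjTranspose_apply, hP, Complex.mul_conj]
  have hPpos : 0 < P := by
    rcases (lt_or_eq_of_le (Finset.sum_nonneg fun j _ => Complex.normSq_nonneg (G k j))) with h | h
    · exact h
    · exfalso
      have hall : ∀ j, G k j = 0 := by
        intro j
        have := (Finset.sum_eq_zero_iff_of_nonneg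
          (fun j _ => Complex.normSq_nonneg (G k j))).1 h.symm j (Finset.mem_univ j)
        exact Complex.normSq_eq_zero.1 this
      have h1 : (G * B) k k = 1 := by rw [hGB]; simp
      rw [Matrix.mul_apply] at h1
      simp [hall] at h1
  -- conjugate transpose facts
  have hBH : Bᴴ = A - (starRingEnd ℂ z) • 1 := by
    rw [hB, Matrix.conjTranspose_sub, Matrix.conjTranspose_smul, Matrix.conjTranspose_one, hA.eq]
    rfl
  have hBHdet : IsUnit Bᴴ.det := by rw [Matrix.det_conjTranspose]; exact hBdet.star
  have hGH : Gᴴ = (Bᴴ)⁻¹ := by rw [hG, Matrix.conjTranspose_nonsing_inv]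
  have hBB : B * Bᴴ = Bᴴ * B := by
    rw [hB, hBH]
    simp only [Matrix.sub_mul, Matrix.mul_sub, Matrix.smul_mul, Matrix.mul_smul,
      Matrix.one_mul, Matrix.mul_one, smul_sub, smul_smul,
      mul_comm z ((starRingEnd ℂ) z)]
    abel
  have hnorm : ∑ j, Complex.normSq (G j k) = P := by
    have h1 : Gᴴ * G = G * Gᴴ := by
      rw [hGH, hG, ← Matrix.mul_inv_rev, ← Matrix.mul_inv_rev, hBB]
    have h2 : (Gᴴ * G) k k = ((∑ j, Complex.normSq (G j k) : ℝ) : ℂ) := by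
      simp [Matrix.mul_apply, Matrix.conjTranspose_apply, Complex.normSq_eq_conj_mul_self]
    have h3 := h2.symm.trans (by rw [h1, hGGH])
    exact_mod_cast h3
  have hBHB : Bᴴ - B = (z - starRingEnd ℂ z) • (1 : Matrix (Fin (n+1)) (Fin (n+1)) ℂ) := by
    rw [hBH, hB, sub_smul]
    abel
  have key : G - Gᴴ = (z - starRingEnd ℂ z) • (G * Gᴴ) := by
    have e1 : G * (Bᴴ - B) * Gᴴ = G - Gᴴ := by
      rw [Matrix.mul_sub, Matrix.sub_mul, hGB, Matrix.one_mul, Matrix.mul_assoc, hGH,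
        Matrix.mul_nonsing_inv _ hBHdet, Matrix.mul_one]
    rw [← e1, hBHB, Matrix.mul_smul, Matrix.smul_mul, Matrix.mul_one]
  have hσim : σ.im = z.im * P := by
    have hkk := congrArg (fun M : Matrix (Fin (n+1)) (Fin (n+1)) ℂ => (M k k).im) key
    simp only [Matrix.sub_apply, Matrix.conjTranspose_apply, Matrix.smul_apply, hGGH,
      smul_eq_mul, Complex.sub_im, Complex.star_def, Complex.conj_im, Complex.mul_im,
      Complex.ofReal_im, Complex.ofReal_re, mul_zero, add_zero, Complex.sub_re] at hkk
    rw [← hσdef] at hkk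
    linarith [hkk]
  have hσim_pos : 0 < σ.im := hσim ▸ mul_pos hz hPpos
  have hσ : σ ≠ 0 := by
    intro h
    rw [h] at hσim_pos
    simp at hσim_pos
  have hDmB : Dm = B.submatrix sA sA := by
    ext i j
    simp [hDm, hB, Matrix.one_apply, hsAinj.eq_iff]
  set W : Matrix (Fin n) (Fin n) ℂ :=
    Matrix.of (fun i j => G (sA i) (sA j) - G (sA i) k * G k (sA j) * σ⁻¹) with hW
  have hDW : Dm * W = 1 := by
    ext i j
    have hsum := Fin.sum_univ_succAbove
      (fun l => B (sA i) l * (G l (sA j) - G l k * (G k (sA j) * σ⁻¹))) k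
    have hT : ∑ l, B (sA i) l * (G l (sA j) - G l k * (G k (sA j) * σ⁻¹))
        = (1 : Matrix (Fin (n+1)) (Fin (n+1)) ℂ) (sA i) (sA j) := by
      have e2 : ∑ l, B (sA i) l * (G l (sA j) - G l k * (G k (sA j) * σ⁻¹))
          = (B * G) (sA i) (sA j) - (B * G) (sA i) k * (G k (sA j) * σ⁻¹) := by
        simp only [mul_sub, Finset.sum_sub_distrib, Matrix.mul_apply, Finset.sum_mul, mul_assoc]
      rw [e2, hBG, Matrix.one_apply_ne (hsAne i), zero_mul, sub_zero]
    have hfk : B (sA i) k * (G k (sA j) - G k k * (G k (sA j) * σ⁻¹)) = 0 := by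
      have : G k k * (G k (sA j) * σ⁻¹) = G k (sA j) := by
        rw [← hσdef, mul_comm (G k (sA j)) σ⁻¹, ← mul_assoc, mul_inv_cancel₀ hσ, one_mul]
      rw [this, sub_self, mul_zero]
    have h1 : (Dm * W) i j = ∑ l : Fin n,
        B (sA i) (sA l) * (G (sA l) (sA j) - G (sA l) k * (G k (sA j) * σ⁻¹)) := by
      simp [Matrix.mul_apply, hDmB, hW, mul_assoc]
    rw [h1]
    have h2 : ∑ l : Fin n, B (sA i) (sA l) * (G (sA l) (sA j) - G (sA l) k * (G k (sA j) * σ⁻¹))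
        = (1 : Matrix (Fin (n+1)) (Fin (n+1)) ℂ) (sA i) (sA j) := by
      rw [hsum, hfk, zero_add] at hT
      exact hT
    rw [h2]
    simp [Matrix.one_apply, hsAinj.eq_iff]
  have hDminv : Dm⁻¹ = W := Matrix.inv_eq_right_inv hDW
  have htrG : G.trace = σ + ∑ i, G (sA i) (sA i) := by
    rw [Matrix.trace]
    exact Fin.sum_univ_succAbove (fun l => G l l) k
  have htrW : W.trace = (∑ i, G (sA i) (sA i)) - (∑ i, G (sA i) k * G k (sA i)) * σ⁻¹ := by
    simp only [Matrix.trace, Matrix.diag, hW, Matrix.of_apply, Finset.sum_sub_distrib,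
      Finset.sum_mul]
  have hGG2 : (G * G) k k = σ * σ + ∑ i, G k (sA i) * G (sA i) k := by
    rw [Matrix.mul_apply]
    exact Fin.sum_univ_succAbove (fun l => G k l * G l k) k
  have hcomm : ∑ i, G (sA i) k * G k (sA i) = ∑ i, G k (sA i) * G (sA i) k :=
    Finset.sum_congr rfl fun i _ => mul_comm _ _
  have hdiff : G.trace - W.trace = (G * G) k k * σ⁻¹ := by
    rw [htrG, htrW, hGG2, hcomm]
    field_simp
    ring
  have hcs : ‖(G * G) k k‖ ≤ P := by
    rw [Matrix.mul_apply]
    calc ‖∑ l, G k l * G l k‖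
        ≤ ∑ l, ‖G k l‖ * ‖G l k‖ := by
          refine (norm_sum_le _ _).trans ?_
          simp
      _ ≤ P := by
          have h2 := Finset.sum_mul_sq_le_sq_mul_sq Finset.univ
            (fun l => ‖G k l‖) (fun l => ‖G l k‖)
          have e1 : ∑ l, ‖G k l‖ ^ 2 = P := by
            simp [Complex.sq_norm, hP]
          have e2 : ∑ l, ‖G l k‖ ^ 2 = P := by
            simp only [Complex.sq_norm]
            exact hnorm
          rw [e1, e2] at h2
          have hsn : 0 ≤ ∑ l, ‖G k l‖ * ‖G l k‖ :=
            Finset.sum_nonneg fun l _ => mul_nonneg (norm_nonneg _) (norm_nonneg _)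
          nlinarith
  have habsσ : z.im * P ≤ ‖σ‖ := by
    rw [← hσim]
    exact Complex.im_le_norm σ
  have habsσpos : 0 < ‖σ‖ := norm_pos_iff.mpr hσ
  rw [hDminv, hdiff]
  rw [norm_mul, norm_inv]
  calc ‖(G * G) k k‖ * ‖σ‖⁻¹
      ≤ P * ‖σ‖⁻¹ := by
        gcongr
    _ ≤ P * (z.im * P)⁻¹ := by
        gcongr
    _ = 1 / z.im := by
        field_simp
  -- done
end
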